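/- Let H be a geometric S-fibered category (every smooth p : P → S has p_# ⊣ p^* and smooth base change holds). If an internal tensor structure (⊗, m) on H satisfies the projection formula (ITS-pf), i.e., the canonical map p_#(A ⊗ p^*B) → p_#A ⊗ B (defined as the composite of the unit η, m_p, and the counit ε) is invertible for all smooth p, then the external tensor structure (⊠, m^e) obtained via A₁ ⊠ A₂ = pr₁^*A₁ ⊗ pr₂^*A₂ satisfies the external projection formula (ETS-pf): the canonical map (p₁ × id)_#(A₁ ⊠ A₂) → (p₁,# A₁) ⊠ A₂ is invertible for all smooth p₁. -/

import Mathlib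

open CategoryTheory Limits

universe v u w z

/-- An `S`-fibered category, presented as a (strictly unital) contravariant
pseudofunctor: a category `H S` for every object, an inverse image functor `f^*`
for every morphism (with `(𝟙 S)^* = 𝟭`), and connection isomorphisms
`conn f g : (f ≫ g)^* ≅ g^* ⋙ f^*` satisfying the cocycle condition (S-fib-1). -/
structure SFib (S : Type z) [Category.{w} S] where
  H : S → Type u
  [cat : ∀ s, Category.{v} (H s)]
  pull : ∀ {t s : S}, (t ⟶ s) → H s ⥤ H t
  pull_id : ∀ s : S, pull (𝟙 s) = 𝟭 (H s)
  conn : ∀ {t s v : S} (f : t ⟶ s) (g : s ⟶ v), pull (f ≫ g) ≅ pull g ⋙ pull f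
  cocycle :
    ∀ {t s v w : S} (f : t ⟶ s) (g : s ⟶ v) (h : v ⟶ w),
      (conn f (g ≫ h)).hom ≫ Functor.whiskerRight (conn g h).hom (pull f) =
        eqToHom (show pull (f ≫ g ≫ h) = pull ((f ≫ g) ≫ h) by rw [Category.assoc]) ≫
          (conn (f ≫ g) h).hom ≫ Functor.whiskerLeft (pull h) (conn f g).hom

attribute [instance] SFib.cat

/-- An internal tensor structure on an `S`-fibered category: tensor product functors
`⊗_S : H(S) × H(S) ⥤ H(S)` together with internal monoidality isomorphisms
`m_f : f^*A ⊗ f^*B ≅ f^*(A ⊗ B)` satisfying the cocycle condition (mITS). -/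
structure ITS {S : Type z} [Category.{w} S] (F : SFib.{v, u} S) where
  tensor : ∀ s : S, F.H s × F.H s ⥤ F.H s
  m : ∀ {t s : S} (f : t ⟶ s),
      (F.pull f).prod (F.pull f) ⋙ tensor t ≅ tensor s ⋙ F.pull f
  mITS :
    ∀ {t s v : S} (f : t ⟶ s) (g : s ⟶ v),
      Functor.whiskerRight (NatTrans.prod (F.conn f g).hom (F.conn f g).hom) (tensor t) ≫
          Functor.whiskerLeft ((F.pull g).prod (F.pull g)) (m f).hom ≫
          Functor.whiskerRight (m g).hom (F.pull f) =
        (m (f ≫ g)).hom ≫ Functor.whiskerLeft (tensor v) (F.conn f g).hom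

variable {S : Type z} [Category.{w} S] [HasBinaryProducts S]

/-- The external tensor product obtained from an internal tensor structure:
`A₁ ⊠ A₂ := pr₁^* A₁ ⊗ pr₂^* A₂`. -/
noncomputable def extT (F : SFib.{v, u} S) (T : ITS F) (s₁ s₂ : S) :
    F.H s₁ × F.H s₂ ⥤ F.H (s₁ ⨯ s₂) :=
  (F.pull (prod.fst : s₁ ⨯ s₂ ⟶ s₁)).prod (F.pull (prod.snd : s₁ ⨯ s₂ ⟶ s₂)) ⋙
    T.tensor (s₁ ⨯ s₂)

/-- The external monoidality isomorphism
`m^e_{f₁,f₂} : f₁^*A₁ ⊠ f₂^*A₂ ≅ (f₁ × f₂)^*(A₁ ⊠ A₂)` obtained from an internal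
tensor structure, built out of connection isomorphisms and `m_{f₁ × f₂}`. -/
noncomputable def mE (F : SFib.{v, u} S) (T : ITS F) {t₁ s₁ t₂ s₂ : S}
    (f₁ : t₁ ⟶ s₁) (f₂ : t₂ ⟶ s₂) :
    (F.pull f₁).prod (F.pull f₂) ⋙ extT F T t₁ t₂ ≅
      extT F T s₁ s₂ ⋙ F.pull (prod.map f₁ f₂) :=
  Functor.isoWhiskerRight
    (NatIso.prod
      ((F.conn (prod.fst : t₁ ⨯ t₂ ⟶ t₁) f₁).symm ≪≫
        eqToIso (show F.pull ((prod.fst : t₁ ⨯ t₂ ⟶ t₁) ≫ f₁) =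
            F.pull (prod.map f₁ f₂ ≫ (prod.fst : s₁ ⨯ s₂ ⟶ s₁)) by rw [prod.map_fst]) ≪≫
        F.conn (prod.map f₁ f₂) (prod.fst : s₁ ⨯ s₂ ⟶ s₁))
      ((F.conn (prod.snd : t₁ ⨯ t₂ ⟶ t₂) f₂).symm ≪≫
        eqToIso (show F.pull ((prod.snd : t₁ ⨯ t₂ ⟶ t₂) ≫ f₂) =
            F.pull (prod.map f₁ f₂ ≫ (prod.snd : s₁ ⨯ s₂ ⟶ s₂)) by rw [prod.map_snd]) ≪≫
        F.conn (prod.map f₁ f₂) (prod.snd : s₁ ⨯ s₂ ⟶ s₂)))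
    (T.tensor (t₁ ⨯ t₂)) ≪≫
  Functor.isoWhiskerLeft
    ((F.pull (prod.fst : s₁ ⨯ s₂ ⟶ s₁)).prod (F.pull (prod.snd : s₁ ⨯ s₂ ⟶ s₂)))
    (T.m (prod.map f₁ f₂))

section Geometric

variable (F : SFib.{v, u} S) (T : ITS F)
variable (Sm : ∀ {X Y : S}, (X ⟶ Y) → Prop)
variable (sh : ∀ {P X : S} (p : P ⟶ X), Sm p → (F.H P ⥤ F.H X))
variable (adj : ∀ {P X : S} (p : P ⟶ X) (hp : Sm p), sh p hp ⊣ F.pull p)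

/-- The base-change (exchange) morphism `p'_# g'^* A ⟶ g^* p_# A` associated to a
commutative square `g' ≫ p = p' ≫ g` with `p, p'` smooth, built from the unit and
counit of the adjunctions `p_# ⊣ p^*`, `p'_# ⊣ p'^*` and the connection
isomorphisms. -/
noncomputable def exch {P Sb S' P' : S} (p : P ⟶ Sb) (hp : Sm p) (g : S' ⟶ Sb)
    (p' : P' ⟶ S') (hp' : Sm p') (g' : P' ⟶ P) (hcomm : g' ≫ p = p' ≫ g)
    (A : F.H P) :
    (sh p' hp').obj ((F.pull g').obj A) ⟶ (F.pull g).obj ((sh p hp).obj A) :=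
  (sh p' hp').map
      ((F.pull g').map ((adj p hp).unit.app A) ≫
        (F.conn g' p).inv.app ((sh p hp).obj A) ≫
        eqToHom (show (F.pull (g' ≫ p)).obj ((sh p hp).obj A) =
            (F.pull (p' ≫ g)).obj ((sh p hp).obj A) by rw [hcomm]) ≫
        (F.conn p' g).hom.app ((sh p hp).obj A)) ≫
    (adj p' hp').counit.app ((F.pull g).obj ((sh p hp).obj A))

/-- The internal projection-formula morphism `p_#(A ⊗ p^*B) ⟶ p_#A ⊗ B`, defined as
the composite of the unit `η`, the monoidality isomorphism `m_p` and the counit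
`ε`. -/
noncomputable def projInt {P X : S} (p : P ⟶ X) (hp : Sm p) (A : F.H P)
    (B : F.H X) :
    (sh p hp).obj ((T.tensor P).obj (A, (F.pull p).obj B)) ⟶
      (T.tensor X).obj ((sh p hp).obj A, B) :=
  (sh p hp).map
      ((T.tensor P).map
          (((adj p hp).unit.app A, 𝟙 ((F.pull p).obj B)) :
            (A, (F.pull p).obj B) ⟶
              ((F.pull p).obj ((sh p hp).obj A), (F.pull p).obj B)) ≫
        (T.m p).hom.app ((sh p hp).obj A, B)) ≫
    (adj p hp).counit.app ((T.tensor X).obj ((sh p hp).obj A, B))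

/-- The external projection-formula morphism
`(p₁ × id)_#(A₁ ⊠ A₂) ⟶ (p₁,# A₁) ⊠ A₂`, defined via the unit, the external
monoidality isomorphism `m^e_{p₁, 𝟙}` and the counit. -/
noncomputable def projExt {P₁ S₁ : S} (p₁ : P₁ ⟶ S₁) (hp₁ : Sm p₁) (S₂ : S)
    (hq : Sm (prod.map p₁ (𝟙 S₂))) (A₁ : F.H P₁) (A₂ : F.H S₂) :
    (sh (prod.map p₁ (𝟙 S₂)) hq).obj ((extT F T P₁ S₂).obj (A₁, A₂)) ⟶
      (extT F T S₁ S₂).obj ((sh p₁ hp₁).obj A₁, A₂) :=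
  (sh (prod.map p₁ (𝟙 S₂)) hq).map
      ((extT F T P₁ S₂).map
          (((adj p₁ hp₁).unit.app A₁, 𝟙 A₂) :
            (A₁, A₂) ⟶ ((F.pull p₁).obj ((sh p₁ hp₁).obj A₁), A₂)) ≫
        eqToHom (show
            (extT F T P₁ S₂).obj ((F.pull p₁).obj ((sh p₁ hp₁).obj A₁), A₂) =
              ((F.pull p₁).prod (F.pull (𝟙 S₂)) ⋙ extT F T P₁ S₂).obj
                ((sh p₁ hp₁).obj A₁, A₂) by rw [F.pull_id]; rfl) ≫
        (mE F T p₁ (𝟙 S₂)).hom.app ((sh p₁ hp₁).obj A₁, A₂)) ≫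
    (adj (prod.map p₁ (𝟙 S₂)) hq).counit.app
      ((extT F T S₁ S₂).obj ((sh p₁ hp₁).obj A₁, A₂))

/-- Auxiliary: an `eqToHom` in a product category is the pair of `eqToHom`s. -/
lemma prod_eqToHom_pair {C D : Type*} [Category C] [Category D]
    {x x' : C} {y y' : D} (h₁ : x = x') (h₂ : y = y') :
    (eqToHom (show ((x, y) : C × D) = (x', y') by rw [h₁, h₂]) :
        ((x, y) : C × D) ⟶ (x', y')) = (eqToHom h₁, eqToHom h₂) := by
  subst h₁; subst h₂; rfl

/-- Auxiliary: the square expressing `P₁ × S₂` as the base change of `p₁ : P₁ ⟶ S₁`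
along the first projection `S₁ × S₂ ⟶ S₁` is Cartesian. -/
lemma isPullback_prodMap_id {P₁ S₁ S₂ : S} (p₁ : P₁ ⟶ S₁) :
    IsPullback (prod.fst : P₁ ⨯ S₂ ⟶ P₁) (prod.map p₁ (𝟙 S₂)) p₁
      (prod.fst : S₁ ⨯ S₂ ⟶ S₁) := by
  refine IsPullback.of_isLimit' ⟨by simp⟩ ?_
  refine PullbackCone.IsLimit.mk _ (fun c => prod.lift c.fst (c.snd ≫ prod.snd))
    (fun c => by simp [prod.lift_fst]) (fun c => ?_) (fun c m h₁ h₂ => ?_)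
  · apply Limits.prod.hom_ext <;> simp [c.condition, prod.lift_fst, prod.lift_snd]
  · apply Limits.prod.hom_ext
    · simpa [prod.lift_fst] using h₁
    · have := h₂ =≫ (prod.snd : S₁ ⨯ S₂ ⟶ S₂)
      simpa [prod.lift_snd] using this

/-- The comparison isomorphism `pr₂^* A₂ ⟶ (p₁ × id)^* pr₂^* A₂` built from
connection isomorphisms and `pull_id`. -/
noncomputable def betaHom {P₁ S₁ : S} (p₁ : P₁ ⟶ S₁) (S₂ : S) (A₂ : F.H S₂) :
    (F.pull (prod.snd : P₁ ⨯ S₂ ⟶ S₂)).obj A₂ ⟶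
      (F.pull (prod.map p₁ (𝟙 S₂))).obj
        ((F.pull (prod.snd : S₁ ⨯ S₂ ⟶ S₂)).obj A₂) :=
  eqToHom (show (F.pull (prod.snd : P₁ ⨯ S₂ ⟶ S₂)).obj A₂ =
      (F.pull (prod.snd : P₁ ⨯ S₂ ⟶ S₂)).obj ((F.pull (𝟙 S₂)).obj A₂) by
    rw [F.pull_id]; rfl) ≫
  (F.conn (prod.snd : P₁ ⨯ S₂ ⟶ S₂) (𝟙 S₂)).inv.app A₂ ≫
  eqToHom (show (F.pull ((prod.snd : P₁ ⨯ S₂ ⟶ S₂) ≫ 𝟙 S₂)).obj A₂ =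
      (F.pull (prod.map p₁ (𝟙 S₂) ≫ (prod.snd : S₁ ⨯ S₂ ⟶ S₂))).obj A₂ by
    rw [prod.map_snd]) ≫
  (F.conn (prod.map p₁ (𝟙 S₂)) (prod.snd : S₁ ⨯ S₂ ⟶ S₂)).hom.app A₂

instance betaHom_isIso {P₁ S₁ : S} (p₁ : P₁ ⟶ S₁) (S₂ : S) (A₂ : F.H S₂) :
    IsIso (betaHom F p₁ S₂ A₂) := by
  unfold betaHom
  infer_instance

/-- Auxiliary: an `eqToHom` between tensor objects differing in the second slot is
the image of the pair of `eqToHom`s. -/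
lemma tensor_eqToHom {s : S} (t : F.H s × F.H s ⥤ F.H s) {x y y' : F.H s}
    (h : y = y') (h' : t.obj (x, y) = t.obj (x, y')) :
    eqToHom h' = t.map ((𝟙 x, eqToHom h) : ((x, y) : F.H s × F.H s) ⟶ (x, y')) := by
  subst h
  simp only [eqToHom_refl]
  rw [← prod_id', CategoryTheory.Functor.map_id]

/-- The key factorization: the external projection morphism is the composite of
(a map induced by) the comparison isomorphism `betaHom`, the internal projection
morphism for `p₁ × id`, and (a map induced by) the exchange morphism. -/
lemma projExt_eq_comp {P₁ S₁ : S} (p₁ : P₁ ⟶ S₁) (hp₁ : Sm p₁) (S₂ : S)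
    (hq : Sm (prod.map p₁ (𝟙 S₂))) (A₁ : F.H P₁) (A₂ : F.H S₂) :
    projExt F T Sm sh adj p₁ hp₁ S₂ hq A₁ A₂ =
      (sh (prod.map p₁ (𝟙 S₂)) hq).map
          ((T.tensor (P₁ ⨯ S₂)).map
            ((𝟙 ((F.pull (prod.fst : P₁ ⨯ S₂ ⟶ P₁)).obj A₁),
              betaHom F p₁ S₂ A₂) :
              ((F.pull (prod.fst : P₁ ⨯ S₂ ⟶ P₁)).obj A₁,
                (F.pull (prod.snd : P₁ ⨯ S₂ ⟶ S₂)).obj A₂) ⟶ _)) ≫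
        projInt F T Sm sh adj (prod.map p₁ (𝟙 S₂)) hq
          ((F.pull (prod.fst : P₁ ⨯ S₂ ⟶ P₁)).obj A₁)
          ((F.pull (prod.snd : S₁ ⨯ S₂ ⟶ S₂)).obj A₂) ≫
        (T.tensor (S₁ ⨯ S₂)).map
          ((exch F Sm sh adj p₁ hp₁ (prod.fst : S₁ ⨯ S₂ ⟶ S₁)
              (prod.map p₁ (𝟙 S₂)) hq (prod.fst : P₁ ⨯ S₂ ⟶ P₁)
              ((prod.map_fst p₁ (𝟙 S₂)).symm) A₁,
            𝟙 ((F.pull (prod.snd : S₁ ⨯ S₂ ⟶ S₂)).obj A₂)) :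
            ((sh (prod.map p₁ (𝟙 S₂)) hq).obj
                ((F.pull (prod.fst : P₁ ⨯ S₂ ⟶ P₁)).obj A₁),
              (F.pull (prod.snd : S₁ ⨯ S₂ ⟶ S₂)).obj A₂) ⟶ _) := by
  have hc : (prod.fst : P₁ ⨯ S₂ ⟶ P₁) ≫ p₁ = prod.map p₁ (𝟙 S₂) ≫ prod.fst :=
    (prod.map_fst p₁ (𝟙 S₂)).symm
  -- Step 1: the unit composed with `q^*` of the exchange morphism is the inner
  -- morphism of the exchange morphism (unit naturality + triangle identity).
  have h3 : (adj (prod.map p₁ (𝟙 S₂)) hq).unit.app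
        ((F.pull (prod.fst : P₁ ⨯ S₂ ⟶ P₁)).obj A₁) ≫
      (F.pull (prod.map p₁ (𝟙 S₂))).map
        (exch F Sm sh adj p₁ hp₁ (prod.fst : S₁ ⨯ S₂ ⟶ S₁) (prod.map p₁ (𝟙 S₂)) hq
          (prod.fst : P₁ ⨯ S₂ ⟶ P₁) ((prod.map_fst p₁ (𝟙 S₂)).symm) A₁) =
      (F.pull (prod.fst : P₁ ⨯ S₂ ⟶ P₁)).map ((adj p₁ hp₁).unit.app A₁) ≫
        (F.conn (prod.fst : P₁ ⨯ S₂ ⟶ P₁) p₁).inv.app ((sh p₁ hp₁).obj A₁) ≫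
        eqToHom (show (F.pull ((prod.fst : P₁ ⨯ S₂ ⟶ P₁) ≫ p₁)).obj ((sh p₁ hp₁).obj A₁) =
            (F.pull (prod.map p₁ (𝟙 S₂) ≫ (prod.fst : S₁ ⨯ S₂ ⟶ S₁))).obj
              ((sh p₁ hp₁).obj A₁) by rw [hc]) ≫
        (F.conn (prod.map p₁ (𝟙 S₂)) (prod.fst : S₁ ⨯ S₂ ⟶ S₁)).hom.app
          ((sh p₁ hp₁).obj A₁) := by
    simp [exch]
  -- Step 2: naturality of the internal monoidality isomorphism at `(e, 𝟙 B)`.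
  have h2 := (T.m (prod.map p₁ (𝟙 S₂))).hom.naturality
    (X := ((sh (prod.map p₁ (𝟙 S₂)) hq).obj ((F.pull (prod.fst : P₁ ⨯ S₂ ⟶ P₁)).obj A₁),
      (F.pull (prod.snd : S₁ ⨯ S₂ ⟶ S₂)).obj A₂))
    (Y := ((F.pull (prod.fst : S₁ ⨯ S₂ ⟶ S₁)).obj ((sh p₁ hp₁).obj A₁),
      (F.pull (prod.snd : S₁ ⨯ S₂ ⟶ S₂)).obj A₂))
    (exch F Sm sh adj p₁ hp₁ (prod.fst : S₁ ⨯ S₂ ⟶ S₁) (prod.map p₁ (𝟙 S₂)) hq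
        (prod.fst : P₁ ⨯ S₂ ⟶ P₁) ((prod.map_fst p₁ (𝟙 S₂)).symm) A₁,
      𝟙 ((F.pull (prod.snd : S₁ ⨯ S₂ ⟶ S₂)).obj A₂))
  simp only [Functor.comp_map, Functor.prod_map, CategoryTheory.Functor.map_id] at h2
  -- Step 3: rewrite the right-hand side using counit naturality, `h2`, and `h3`.
  conv_rhs =>
    rw [projInt]
    simp only [Category.assoc]
    rw [← Adjunction.counit_naturality]
    simp only [← Category.assoc]
    simp only [← Functor.map_comp]
    simp only [Category.assoc]
    rw [← h2]
    simp only [← Category.assoc]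
    simp only [← Functor.map_comp]
    simp only [prod_comp, Category.id_comp, Category.comp_id, CategoryTheory.Functor.map_id]
    rw [h3]
    simp only [Category.assoc]
  -- Step 4: both sides are now maps of explicit composites; compare them.
  rw [projExt]
  simp only [extT, mE, betaHom, Functor.comp_obj, Functor.comp_map,
    Functor.prod_obj, Functor.prod_map, Iso.trans_hom, Iso.symm_hom,
    Functor.isoWhiskerRight_hom, Functor.isoWhiskerLeft_hom, Functor.whiskerRight_app, Functor.whiskerLeft_app,
    NatTrans.comp_app, NatTrans.prod, NatIso.prod, eqToIso.hom, eqToHom_app,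
    Functor.map_comp, Category.assoc, prod_comp]
  erw [tensor_eqToHom F (T.tensor (P₁ ⨯ S₂))
    (show (F.pull (prod.snd : P₁ ⨯ S₂ ⟶ S₂)).obj A₂ =
        (F.pull (prod.snd : P₁ ⨯ S₂ ⟶ S₂)).obj ((F.pull (𝟙 S₂)).obj A₂) by
      rw [F.pull_id]; rfl)]
  simp only [← Category.assoc]
  simp only [← Functor.map_comp]
  simp only [prod_comp, Category.id_comp, Category.comp_id, CategoryTheory.Functor.map_id,
    Category.assoc]

/-- Let `H` be a geometric `S`-fibered category: the class `Sm` of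
smooth morphisms is stable under base change, every smooth `p` admits a left adjoint
`p_# ⊣ p^*`, and the base-change (exchange) morphisms for pullback squares with
smooth vertical maps are invertible.  If an internal tensor structure `(⊗, m)` on `H`
satisfies the projection formula (ITS-pf), i.e. the canonical maps
`p_#(A ⊗ p^*B) ⟶ p_#A ⊗ B` are invertible for all smooth `p`, then the external
tensor structure `(⊠, m^e)` obtained via `A₁ ⊠ A₂ = pr₁^*A₁ ⊗ pr₂^*A₂` satisfies the
external projection formula (ETS-pf): the canonical maps
`(p₁ × id)_#(A₁ ⊠ A₂) ⟶ (p₁,# A₁) ⊠ A₂` are invertible for all smooth `p₁`. -/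
theorem stmt18
    (stab : ∀ {P' S' P Sb : S} (g' : P' ⟶ P) (p' : P' ⟶ S') (p : P ⟶ Sb)
      (g : S' ⟶ Sb), IsPullback g' p' p g → Sm p → Sm p')
    (bc : ∀ {P Sb S' P' : S} (p : P ⟶ Sb) (hp : Sm p) (g : S' ⟶ Sb) (p' : P' ⟶ S')
      (hp' : Sm p') (g' : P' ⟶ P) (hpb : IsPullback g' p' p g) (A : F.H P),
      IsIso (exch F Sm sh adj p hp g p' hp' g' hpb.w A))
    (hproj : ∀ {P X : S} (p : P ⟶ X) (hp : Sm p) (A : F.H P) (B : F.H X),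
      IsIso (projInt F T Sm sh adj p hp A B)) :
    ∀ {P₁ S₁ : S} (p₁ : P₁ ⟶ S₁) (hp₁ : Sm p₁) (S₂ : S)
      (hq : Sm (prod.map p₁ (𝟙 S₂))) (A₁ : F.H P₁) (A₂ : F.H S₂),
      IsIso (projExt F T Sm sh adj p₁ hp₁ S₂ hq A₁ A₂) := by
  intro P₁ S₁ p₁ hp₁ S₂ hq A₁ A₂
  rw [projExt_eq_comp]
  haveI := hproj (prod.map p₁ (𝟙 S₂)) hq
    ((F.pull (prod.fst : P₁ ⨯ S₂ ⟶ P₁)).obj A₁)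
    ((F.pull (prod.snd : S₁ ⨯ S₂ ⟶ S₂)).obj A₂)
  haveI : IsIso (exch F Sm sh adj p₁ hp₁ (prod.fst : S₁ ⨯ S₂ ⟶ S₁)
      (prod.map p₁ (𝟙 S₂)) hq (prod.fst : P₁ ⨯ S₂ ⟶ P₁)
      ((prod.map_fst p₁ (𝟙 S₂)).symm)
      A₁) :=
    bc p₁ hp₁ (prod.fst : S₁ ⨯ S₂ ⟶ S₁) (prod.map p₁ (𝟙 S₂)) hq
      (prod.fst : P₁ ⨯ S₂ ⟶ P₁) (isPullback_prodMap_id p₁) A₁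
  haveI : IsIso (C := F.H (P₁ ⨯ S₂) × F.H (P₁ ⨯ S₂))
      (X := ((F.pull (prod.fst : P₁ ⨯ S₂ ⟶ P₁)).obj A₁,
        (F.pull (prod.snd : P₁ ⨯ S₂ ⟶ S₂)).obj A₂))
      (Y := ((F.pull (prod.fst : P₁ ⨯ S₂ ⟶ P₁)).obj A₁,
        (F.pull (prod.map p₁ (𝟙 S₂))).obj
          ((F.pull (prod.snd : S₁ ⨯ S₂ ⟶ S₂)).obj A₂)))
      (𝟙 ((F.pull (prod.fst : P₁ ⨯ S₂ ⟶ P₁)).obj A₁), betaHom F p₁ S₂ A₂) := by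
    exact inferInstanceAs
      (IsIso ((Iso.refl _).prod (asIso (betaHom F p₁ S₂ A₂))).hom)
  haveI : IsIso (C := F.H (S₁ ⨯ S₂) × F.H (S₁ ⨯ S₂))
      (X := ((sh (prod.map p₁ (𝟙 S₂)) hq).obj
          ((F.pull (prod.fst : P₁ ⨯ S₂ ⟶ P₁)).obj A₁),
        (F.pull (prod.snd : S₁ ⨯ S₂ ⟶ S₂)).obj A₂))
      (Y := ((F.pull (prod.fst : S₁ ⨯ S₂ ⟶ S₁)).obj ((sh p₁ hp₁).obj A₁),
        (F.pull (prod.snd : S₁ ⨯ S₂ ⟶ S₂)).obj A₂))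
      (exch F Sm sh adj p₁ hp₁ (prod.fst : S₁ ⨯ S₂ ⟶ S₁)
        (prod.map p₁ (𝟙 S₂)) hq (prod.fst : P₁ ⨯ S₂ ⟶ P₁) ((prod.map_fst p₁ (𝟙 S₂)).symm) A₁,
       𝟙 ((F.pull (prod.snd : S₁ ⨯ S₂ ⟶ S₂)).obj A₂)) := by
    exact inferInstanceAs
      (IsIso ((asIso (exch F Sm sh adj p₁ hp₁ (prod.fst : S₁ ⨯ S₂ ⟶ S₁)
        (prod.map p₁ (𝟙 S₂)) hq (prod.fst : P₁ ⨯ S₂ ⟶ P₁) ((prod.map_fst p₁ (𝟙 S₂)).symm) A₁)).prod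
        (Iso.refl _)).hom)
  refine IsIso.comp_isIso' ?_ (IsIso.comp_isIso' inferInstance ?_)
  · refine @Functor.map_isIso _ _ _ _ _ _ _ _ ?_
    refine @Functor.map_isIso _ _ _ _ _ _ _ _ ?_
    assumption
  · refine @Functor.map_isIso _ _ _ _ _ _ _ _ ?_
    assumption

end Geometric
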